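/- arXiv:2108.03943 — 5 statements merged into one kernel-verified Lean document; each statement's English description precedes it below -/
import Mathlib

section
/- If n is an even positive integer that is not a power of 2, then there exists a transitive permutation group G of degree n whose derangement graph Γ_G is a complete multipartite graph with n/2 parts. -/
/-! ### Basic definitions: derangement graphs, intersecting sets, EKR properties -/

/-- The derangement graph of a permutation group `G ≤ Sym(V)`: vertices are the elements
of `G`, and distinct `g`, `h` are adjacent iff `g * h⁻¹` is fixed-point-free on `V`. -/
def derGraph {V : Type*} (G : Subgroup (Equiv.Perm V)) : SimpleGraph G where
  Adj g h := g ≠ h ∧ ∀ v : V, ((g : Equiv.Perm V) * (h : Equiv.Perm V)⁻¹) v ≠ v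
  symm := ⟨by
    rintro g h ⟨hne, hd⟩
    refine ⟨hne.symm, fun v hv => hd v ?_⟩
    have h2 := congrArg (⇑(((h : Equiv.Perm V) * (g : Equiv.Perm V)⁻¹)⁻¹)) hv
    simpa [mul_inv_rev] using h2.symm⟩
  loopless := ⟨fun g hg => hg.1 rfl⟩

/-- A subset `I` of a permutation group `G ≤ Sym(V)` is intersecting if any two of its
elements agree on some point of `V`. -/
def IsIntersecting {V : Type*} (G : Subgroup (Equiv.Perm V)) (I : Set G) : Prop :=
  ∀ g ∈ I, ∀ h ∈ I, ∃ v : V, (g : Equiv.Perm V) v = (h : Equiv.Perm V) v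

/-- A permutation group `G ≤ Sym(V)` is transitive if it acts transitively on `V`. -/
def IsTransitive {V : Type*} (G : Subgroup (Equiv.Perm V)) : Prop :=
  ∀ v w : V, ∃ g ∈ G, g v = w

/-- A permutation group is regular if it is transitive and all point stabilizers are trivial. -/
def IsRegularGroup {V : Type*} (G : Subgroup (Equiv.Perm V)) : Prop :=
  IsTransitive G ∧ ∀ g ∈ G, ∀ v : V, g v = v → g = 1

/-- The stabilizer of a point `v`, as a subset of the permutation group `G`. -/
def stabSet {V : Type*} (G : Subgroup (Equiv.Perm V)) (v : V) : Set G :=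
  {g : G | (g : Equiv.Perm V) v = v}

/-- The intersection density `ρ(G)` of a (transitive) permutation group `G`: the maximum of
`|I| / |G_v|` over all intersecting sets `I` of `G`, where `G_v` is a point stabilizer. -/
noncomputable def interDensity {V : Type*} (G : Subgroup (Equiv.Perm V)) : ℝ :=
  sSup {x : ℝ | ∃ (I : Set G) (v : V), IsIntersecting G I ∧
    x = (Nat.card I : ℝ) / (Nat.card (stabSet G v) : ℝ)}

/-- A permutation group has the EKR-property if every intersecting set has size at most
the size of the largest point stabilizer. -/
def HasEKR {V : Type*} (G : Subgroup (Equiv.Perm V)) : Prop :=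
  ∀ I : Set G, IsIntersecting G I → Nat.card I ≤ ⨆ v : V, Nat.card (stabSet G v)

/-- A permutation group has the strict-EKR-property if every intersecting set of maximum
size is a coset of a point stabilizer. -/
def HasStrictEKR {V : Type*} (G : Subgroup (Equiv.Perm V)) : Prop :=
  ∀ I : Set G, IsIntersecting G I →
    (∀ J : Set G, IsIntersecting G J → Nat.card J ≤ Nat.card I) →
    ∃ (v : V) (a : G), I = (fun g => a * g) '' stabSet G v

/-! ### Graph products and related graph-theoretic notions -/

/-- The strong product of two simple graphs. -/
def strongProd {α β : Type*} (X : SimpleGraph α) (Y : SimpleGraph β) :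
    SimpleGraph (α × β) where
  Adj p q := (p.1 = q.1 ∧ Y.Adj p.2 q.2) ∨ (p.2 = q.2 ∧ X.Adj p.1 q.1) ∨
    (X.Adj p.1 q.1 ∧ Y.Adj p.2 q.2)
  symm := ⟨by
    rintro p q (⟨h1, h2⟩ | ⟨h1, h2⟩ | ⟨h1, h2⟩)
    · exact Or.inl ⟨h1.symm, h2.symm⟩
    · exact Or.inr (Or.inl ⟨h1.symm, h2.symm⟩)
    · exact Or.inr (Or.inr ⟨h1.symm, h2.symm⟩)⟩
  loopless := ⟨by
    rintro p (⟨_, h⟩ | ⟨_, h⟩ | ⟨h, _⟩)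
    · exact Y.loopless.irrefl _ h
    · exact X.loopless.irrefl _ h
    · exact X.loopless.irrefl _ h⟩

/-- The tensor (direct, categorical) product of two simple graphs. -/
def tensorProd {α β : Type*} (X : SimpleGraph α) (Y : SimpleGraph β) :
    SimpleGraph (α × β) where
  Adj p q := X.Adj p.1 q.1 ∧ Y.Adj p.2 q.2
  symm := ⟨fun _ _ ⟨h1, h2⟩ => ⟨h1.symm, h2.symm⟩⟩
  loopless := ⟨fun _ ⟨h1, _⟩ => X.loopless.irrefl _ h1⟩

/-- The tensor (direct) product of a family of simple graphs: two tuples are adjacent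
iff they are adjacent in every coordinate (for a nonempty index type this coincides with
the definition below, where distinctness is required to keep the graph loopless). -/
def tensorPi {ι : Type*} {α : ι → Type*} (X : ∀ i, SimpleGraph (α i)) :
    SimpleGraph (∀ i, α i) where
  Adj f g := f ≠ g ∧ ∀ i, (X i).Adj (f i) (g i)
  symm := ⟨fun _ _ ⟨hne, h⟩ => ⟨hne.symm, fun i => (h i).symm⟩⟩
  loopless := ⟨fun _ h => h.1 rfl⟩

/-- The disjoint union of `ι`-indexed copies of a simple graph `X`. -/
def copiesGraph (ι : Type*) {α : Type*} (X : SimpleGraph α) : SimpleGraph (ι × α) where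
  Adj p q := p.1 = q.1 ∧ X.Adj p.2 q.2
  symm := ⟨fun _ _ ⟨h1, h2⟩ => ⟨h1.symm, h2.symm⟩⟩
  loopless := ⟨fun _ h => X.loopless.irrefl _ h.2⟩

/-- The lexicographic product (wreath product) `X[Y]` of simple graphs. -/
def lexProd {α β : Type*} (X : SimpleGraph α) (Y : SimpleGraph β) :
    SimpleGraph (α × β) where
  Adj p q := X.Adj p.1 q.1 ∨ (p.1 = q.1 ∧ Y.Adj p.2 q.2)
  symm := ⟨by
    rintro p q (h | ⟨h1, h2⟩)
    · exact Or.inl h.symm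
    · exact Or.inr ⟨h1.symm, h2.symm⟩⟩
  loopless := ⟨by
    rintro p (h | ⟨_, h⟩)
    · exact X.loopless.irrefl _ h
    · exact Y.loopless.irrefl _ h⟩

/-- A simple graph is complete multipartite with `k` parts if its vertex set can be
partitioned into `k` (nonempty) parts so that two vertices are adjacent iff they lie in
different parts. -/
def IsCompleteMultipartiteWith {α : Type*} (X : SimpleGraph α) (k : ℕ) : Prop :=
  ∃ f : α → Fin k, Function.Surjective f ∧ ∀ a b : α, X.Adj a b ↔ f a ≠ f b

/-- An independent set (coclique) of a simple graph. -/
def IsIndep {α : Type*} (X : SimpleGraph α) (A : Set α) : Prop :=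
  ∀ a ∈ A, ∀ b ∈ A, ¬ X.Adj a b

/-- The independence number `α(X)` of a simple graph. -/
noncomputable def indepNum {α : Type*} (X : SimpleGraph α) : ℕ :=
  sSup {k : ℕ | ∃ A : Set α, IsIndep X A ∧ Nat.card A = k}

/-- The closed neighbourhood `N[A]` of a set `A` of vertices. -/
def closedNbhd {α : Type*} (X : SimpleGraph α) (A : Set α) : Set α :=
  {b | ∃ a ∈ A, a = b ∨ X.Adj a b}

/-- A graph `X` is IS-primitive if there is no non-maximum independent set `A` with
`|A| / |N[A]| = α(X) / |V(X)|`. -/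
def IsISPrimitive {α : Type*} (X : SimpleGraph α) : Prop :=
  ¬ ∃ A : Set α, IsIndep X A ∧ Nat.card A < indepNum X ∧
    (Nat.card A : ℚ) / (Nat.card (closedNbhd X A) : ℚ) =
      (indepNum X : ℚ) / (Nat.card α : ℚ)

/-- A simple graph is vertex-transitive if its automorphism group acts transitively on the
vertices. -/
def IsVertexTransitive {α : Type*} (X : SimpleGraph α) : Prop :=
  ∀ a b : α, ∃ e : X ≃g X, e a = b

/-! ### External and internal direct products of permutation groups -/

/-- The canonical monoid homomorphism `Sym(V) × Sym(W) → Sym(V × W)`. -/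
def permProdCongrHom (V W : Type*) : Equiv.Perm V × Equiv.Perm W →* Equiv.Perm (V × W) where
  toFun p := Equiv.prodCongr p.1 p.2
  map_one' := Equiv.ext fun _ => rfl
  map_mul' := fun _ _ => Equiv.ext fun _ => rfl

/-- The external direct product of permutation groups `G ≤ Sym(V)` and `H ≤ Sym(W)`,
acting on `V × W` by `(g,h)⬝(v,w) = (g v, h w)`. -/
def extProd {V W : Type*} (G : Subgroup (Equiv.Perm V)) (H : Subgroup (Equiv.Perm W)) :
    Subgroup (Equiv.Perm (V × W)) :=
  Subgroup.map (permProdCongrHom V W) (G.prod H)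

/-- The internal direct product of a family of permutation groups `G i ≤ Sym(V i)`,
acting componentwise on the disjoint union `Σ i, V i`. -/
def intProd {ι : Type*} {V : ι → Type*} (G : ∀ i, Subgroup (Equiv.Perm (V i))) :
    Subgroup (Equiv.Perm (Σ i, V i)) :=
  Subgroup.map (Equiv.Perm.sigmaCongrRightHom V) (Subgroup.pi Set.univ G)

/-! ### Wreath products of permutation groups -/

/-- The permutation of `V × {1,…,n}` associated to an element `((g₁,…,gₙ), h)` of the
wreath product: `(a, i) ↦ (gᵢ a, h i)`. -/
def wreathPerm {V : Type*} {n : ℕ} (g : Fin n → Equiv.Perm V) (h : Equiv.Perm (Fin n)) :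
    Equiv.Perm (V × Fin n) where
  toFun p := (g p.2 p.1, h p.2)
  invFun p := ((g (h⁻¹ p.2))⁻¹ p.1, h⁻¹ p.2)
  left_inv := by rintro ⟨a, i⟩; simp
  right_inv := by rintro ⟨b, j⟩; simp

/-- The wreath product `G ≀ H` of `G ≤ Sym(V)` by `H ≤ Sₙ`, as a permutation group
acting on `V × {1,…,n}`. -/
def wreathProd {V : Type*} {n : ℕ} (G : Subgroup (Equiv.Perm V))
    (H : Subgroup (Equiv.Perm (Fin n))) : Subgroup (Equiv.Perm (V × Fin n)) where
  carrier := {σ | ∃ (g : Fin n → Equiv.Perm V) (h : Equiv.Perm (Fin n)),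
    (∀ i, g i ∈ G) ∧ h ∈ H ∧ σ = wreathPerm g h}
  one_mem' := ⟨fun _ => 1, 1, fun _ => G.one_mem, H.one_mem, Equiv.ext fun _ => rfl⟩
  mul_mem' := by
    rintro σ τ ⟨g, h, hg, hh, rfl⟩ ⟨g', h', hg', hh', rfl⟩
    exact ⟨fun i => g (h' i) * g' i, h * h',
      fun i => G.mul_mem (hg _) (hg' _), H.mul_mem hh hh', Equiv.ext fun _ => rfl⟩
  inv_mem' := by
    rintro σ ⟨g, h, hg, hh, rfl⟩
    exact ⟨fun i => (g (h⁻¹ i))⁻¹, h⁻¹,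
      fun i => G.inv_mem (hg _), H.inv_mem hh, Equiv.ext fun _ => rfl⟩

theorem mem_wreathProd {V : Type*} {n : ℕ} {G : Subgroup (Equiv.Perm V)}
    {H : Subgroup (Equiv.Perm (Fin n))} {σ : Equiv.Perm (V × Fin n)} :
    σ ∈ wreathProd G H ↔ ∃ (g : Fin n → Equiv.Perm V) (h : Equiv.Perm (Fin n)),
      (∀ i, g i ∈ G) ∧ h ∈ H ∧ σ = wreathPerm g h := Iff.rfl

/-! ### Auxiliary construction -/

section AuxCM

/-- Transport of permutations along an equivalence, as a monoid hom. -/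
def permTransport {α β : Type*} (e : α ≃ β) : Equiv.Perm α →* Equiv.Perm β where
  toFun σ := (e.symm.trans σ).trans e
  map_one' := by ext b; simp
  map_mul' σ τ := by ext b; simp

theorem permTransport_apply {α β : Type*} (e : α ≃ β) (σ : Equiv.Perm α) (x : α) :
    permTransport e σ (e x) = e (σ x) := by simp [permTransport]

variable (m p : ℕ)

/-- The basic permutation `(ε, i) ↦ (ε + v (i mod p), i + j)` of `ZMod 2 × ZMod m`. -/
def mkCM (hdv : p ∣ m) (v : ZMod p → ZMod 2) (j : ZMod m) :
    Equiv.Perm (ZMod 2 × ZMod m) where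
  toFun x := (x.1 + v (ZMod.castHom hdv (ZMod p) x.2), x.2 + j)
  invFun x := (x.1 + v (ZMod.castHom hdv (ZMod p) (x.2 - j)), x.2 - j)
  left_inv := by
    rintro ⟨a, i⟩
    simp only [add_sub_cancel_right]
    rw [add_assoc, CharTwo.add_self_eq_zero, add_zero]
  right_inv := by
    rintro ⟨a, i⟩
    simp only [sub_add_cancel]
    rw [add_assoc, CharTwo.add_self_eq_zero, add_zero]

variable [NeZero p]

/-- The group of all `mkCM` permutations with even-weight `v`. -/
def cmGroup (hdv : p ∣ m) : Subgroup (Equiv.Perm (ZMod 2 × ZMod m)) where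
  carrier := {σ | ∃ (v : ZMod p → ZMod 2) (j : ZMod m),
    (∑ x : ZMod p, v x) = 0 ∧ σ = mkCM m p hdv v j}
  one_mem' := ⟨0, 0, by simp, Equiv.ext fun x => by simp [mkCM]⟩
  mul_mem' := by
    rintro σ τ ⟨v, j, hv, rfl⟩ ⟨v', j', hv', rfl⟩
    refine ⟨fun x => v' x + v (x + ZMod.castHom hdv (ZMod p) j'), j' + j, ?_, ?_⟩
    · rw [Finset.sum_add_distrib, hv']
      rw [Fintype.sum_equiv (Equiv.addRight (ZMod.castHom hdv (ZMod p) j'))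
        (fun x => v (x + ZMod.castHom hdv (ZMod p) j')) v (fun x => rfl), hv, add_zero]
    · apply Equiv.ext
      rintro ⟨a, i⟩
      rw [Equiv.Perm.mul_apply]
      show ((a + v' (ZMod.castHom hdv (ZMod p) i)) + v (ZMod.castHom hdv (ZMod p) (i + j')),
          (i + j') + j)
        = (a + (v' (ZMod.castHom hdv (ZMod p) i)
            + v (ZMod.castHom hdv (ZMod p) i + ZMod.castHom hdv (ZMod p) j')), i + (j' + j))
      rw [map_add, add_assoc, add_assoc]
  inv_mem' := by
    rintro σ ⟨v, j, hv, rfl⟩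
    refine ⟨fun x => v (x - ZMod.castHom hdv (ZMod p) j), -j, ?_, ?_⟩
    · rw [Fintype.sum_equiv (Equiv.subRight (ZMod.castHom hdv (ZMod p) j))
        (fun x => v (x - ZMod.castHom hdv (ZMod p) j)) v (fun x => rfl), hv]
    · apply Equiv.ext
      rintro ⟨a, i⟩
      show (a + v (ZMod.castHom hdv (ZMod p) (i - j)), i - j)
        = (a + v (ZMod.castHom hdv (ZMod p) i - ZMod.castHom hdv (ZMod p) j), i + -j)
      rw [map_sub]
      rw [show i - j = i + -j from sub_eq_add_neg i j]

theorem mem_cmGroup {m p : ℕ} [NeZero p] {hdv : p ∣ m} {σ : Equiv.Perm (ZMod 2 × ZMod m)} :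
    σ ∈ cmGroup m p hdv ↔ ∃ (v : ZMod p → ZMod 2) (j : ZMod m),
      (∑ x : ZMod p, v x) = 0 ∧ σ = mkCM m p hdv v j := Iff.rfl

theorem zmod2_ne_zero (b : ZMod 2) (hb : b ≠ 0) : b = 1 := by revert b; decide

/-- When the slope is zero and `p` is odd, a group element has a fixed point. -/
theorem exists_fixed_cm (hdv : p ∣ m) (hp2 : ¬ 2 ∣ p) (v : ZMod p → ZMod 2)
    (hv : (∑ x : ZMod p, v x) = 0) : ∃ x, mkCM m p hdv v 0 x = x := by
  have hex : ∃ a, v a = 0 := by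
    by_contra h
    push_neg at h
    rw [Finset.sum_congr rfl (fun a _ => zmod2_ne_zero (v a) (h a))] at hv
    rw [Finset.sum_const, Finset.card_univ, ZMod.card, nsmul_eq_mul, mul_one] at hv
    exact hp2 ((ZMod.natCast_eq_zero_iff p 2).mp hv)
  obtain ⟨a, ha⟩ := hex
  obtain ⟨k, hk⟩ := ZMod.natCast_zmod_surjective (n := p) a
  refine ⟨((0 : ZMod 2), (k : ZMod m)), ?_⟩
  have hπ : ZMod.castHom hdv (ZMod p) ((k : ZMod m)) = a := by
    rw [map_natCast, hk]
  show ((0 : ZMod 2) + v (ZMod.castHom hdv (ZMod p) ((k : ZMod m))), ((k : ZMod m) + 0))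
    = ((0 : ZMod 2), (k : ZMod m))
  rw [hπ, ha, add_zero, add_zero]

end AuxCM

/-- If `n` is even but not a power of `2`, then there is a transitive
permutation group `G` of degree `n` whose derangement graph is complete multipartite with
`n / 2` parts. -/
theorem exists_transitive_completeMultipartite (n : ℕ) (hpos : 0 < n) (heven : Even n)
    (hnotpow : ∀ k : ℕ, n ≠ 2 ^ k) :
    ∃ G : Subgroup (Equiv.Perm (Fin n)), IsTransitive G ∧
      IsCompleteMultipartiteWith (derGraph G) (n / 2) := by
  obtain ⟨m', hm'⟩ := heven
  set m := n / 2 with hmdef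
  have h2m : n = 2 * m := by omega
  have hm0 : 0 < m := by omega
  have hmnp : ∀ k, m ≠ 2 ^ k := by
    intro k hk
    exact hnotpow (k + 1) (by rw [h2m, hk]; ring)
  set p := ordCompl[2] m with hp
  have hdvd : p ∣ m := Nat.ordCompl_dvd m 2
  have hodd : ¬ (2 ∣ p) := Nat.not_dvd_ordCompl Nat.prime_two hm0.ne'
  have hp0 : 0 < p := Nat.ordCompl_pos 2 hm0.ne'
  have hp1 : p ≠ 1 := by
    intro h1
    have h2 := Nat.ordProj_mul_ordCompl_eq_self m 2
    rw [← hp, h1, mul_one] at h2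
    exact hmnp _ h2.symm
  haveI : NeZero m := ⟨hm0.ne'⟩
  haveI : NeZero p := ⟨hp0.ne'⟩
  haveI : Fact (1 < p) := ⟨by omega⟩
  have ecard : Fintype.card (ZMod 2 × ZMod m) = n := by
    simp [ZMod.card, h2m]
  let e : ZMod 2 × ZMod m ≃ Fin n := Fintype.equivFinOfCardEq ecard
  refine ⟨Subgroup.map (permTransport e) (cmGroup m p hdvd), ?_, ?_⟩
  · -- transitivity
    intro a b
    set x := e.symm a with hx
    set y := e.symm b with hy
    set a0 := ZMod.castHom hdvd (ZMod p) x.2 with ha0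
    set δ := y.1 - x.1 with hδ
    set v : ZMod p → ZMod 2 :=
      fun t => (if t = a0 then δ else 0) + (if t = a0 + 1 then δ else 0) with hv
    have hne : a0 ≠ a0 + 1 := by
      intro h
      have h1 : (1 : ZMod p) = 0 := by linear_combination -h
      exact one_ne_zero h1
    have hsum : (∑ t : ZMod p, v t) = 0 := by
      rw [hv]
      rw [Finset.sum_add_distrib, Finset.sum_ite_eq' Finset.univ a0 (fun _ => δ),
        Finset.sum_ite_eq' Finset.univ (a0 + 1) (fun _ => δ)]
      simp [CharTwo.add_self_eq_zero]
    have hva : v a0 = δ := by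
      rw [hv]
      simp [hne]
    refine ⟨permTransport e (mkCM m p hdvd v (y.2 - x.2)),
      Subgroup.mem_map_of_mem _ (mem_cmGroup.mpr ⟨v, y.2 - x.2, hsum, rfl⟩), ?_⟩
    have hax : a = e x := by rw [hx, Equiv.apply_symm_apply]
    have hby : b = e y := by rw [hy, Equiv.apply_symm_apply]
    rw [hax, permTransport_apply, hby]
    congr 1
    show (x.1 + v a0, x.2 + (y.2 - x.2)) = y
    have h1 : x.1 + v a0 = y.1 := by rw [hva, hδ]; ring
    have h2 : x.2 + (y.2 - x.2) = y.2 := by ring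
    rw [h1, h2]
  · -- complete multipartite
    let ζ : ZMod m ≃ Fin m := Fintype.equivFinOfCardEq (ZMod.card m)
    set G := Subgroup.map (permTransport e) (cmGroup m p hdvd) with hG
    refine ⟨fun g => ζ ((e.symm ((g : Equiv.Perm (Fin n)) (e (0, 0)))).2), ?_, ?_⟩
    · -- surjective
      intro c
      refine ⟨⟨permTransport e (mkCM m p hdvd 0 (ζ.symm c)),
        Subgroup.mem_map_of_mem _ (mem_cmGroup.mpr ⟨0, ζ.symm c, by simp, rfl⟩)⟩, ?_⟩
      show ζ ((e.symm (permTransport e (mkCM m p hdvd 0 (ζ.symm c)) (e (0, 0)))).2) = c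
      rw [permTransport_apply, Equiv.symm_apply_apply]
      show ζ (0 + ζ.symm c) = c
      rw [zero_add, Equiv.apply_symm_apply]
    · -- adjacency iff parts differ
      intro g h
      obtain ⟨σ1, hσ1, hg1⟩ := Subgroup.mem_map.mp g.2
      obtain ⟨v, j, hvs, rfl⟩ := mem_cmGroup.mp hσ1
      obtain ⟨σ2, hσ2, hh1⟩ := Subgroup.mem_map.mp h.2
      obtain ⟨v', j', hvs', rfl⟩ := mem_cmGroup.mp hσ2
      have hfg : ζ ((e.symm ((g : Equiv.Perm (Fin n)) (e (0, 0)))).2) = ζ j := by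
        rw [← hg1, permTransport_apply, Equiv.symm_apply_apply]
        show ζ (0 + j) = ζ j
        rw [zero_add]
      have hfh : ζ ((e.symm ((h : Equiv.Perm (Fin n)) (e (0, 0)))).2) = ζ j' := by
        rw [← hh1, permTransport_apply, Equiv.symm_apply_apply]
        show ζ (0 + j') = ζ j'
        rw [zero_add]
      simp only [ne_eq, hfg, hfh]
      have key : ∀ x : Fin n,
          ((g : Equiv.Perm (Fin n)) * (h : Equiv.Perm (Fin n))⁻¹) x
          = e ((mkCM m p hdvd v j * (mkCM m p hdvd v' j')⁻¹) (e.symm x)) := by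
        intro x
        rw [← hg1, ← hh1, ← map_inv, ← map_mul]
        rfl
      constructor
      · rintro ⟨hne, hder⟩ hζ
        have hjj' : j = j' := ζ.injective hζ
        have hmem : mkCM m p hdvd v j * (mkCM m p hdvd v' j')⁻¹ ∈ cmGroup m p hdvd :=
          mul_mem (mem_cmGroup.mpr ⟨v, j, hvs, rfl⟩)
            (inv_mem (mem_cmGroup.mpr ⟨v', j', hvs', rfl⟩))
        obtain ⟨u, l, hus, hueq⟩ := mem_cmGroup.mp hmem
        have h5 : ((0 : ZMod m) - j') + j = 0 + l :=
          congrArg (fun σ => (σ ((0 : ZMod 2), (0 : ZMod m))).2) hueq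
        have hl : l = 0 := by linear_combination -h5 + hjj'
        subst hl
        obtain ⟨x₀, hx₀⟩ := exists_fixed_cm m p hdvd hodd u hus
        apply hder (e x₀)
        rw [key (e x₀), Equiv.symm_apply_apply, hueq, hx₀]
      · intro hζ
        have hjj : j ≠ j' := fun hjeq => hζ (by rw [hjeq])
        refine ⟨?_, ?_⟩
        · intro hgh
          exact hζ (by rw [← hfg, ← hfh, hgh])
        · intro x hfix
          rw [key x] at hfix
          have h6 : (mkCM m p hdvd v j * (mkCM m p hdvd v' j')⁻¹) (e.symm x) = e.symm x := by
            have := congrArg e.symm hfix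
            rwa [Equiv.symm_apply_apply] at this
          have h7 : ((e.symm x).2 - j') + j = (e.symm x).2 := congrArg Prod.snd h6
          exact hjj (by linear_combination h7)
end

section
/- Let V and W be finite sets, let G ≤ Sym(V) and H ≤ Sym(W) be transitive permutation groups, and let G × H act on V × W by (g,h)·(v,w) = (g(v), h(w)). Then G × H has the strict-EKR-property if and only if both G and H have the strict-EKR-property. -/
section EKRAuxZZ

open Set

/-- Cardinality of products of sets. -/
private lemma zz_ncard_prod {α β : Type*} (S : Set α) (T : Set β) :
    Nat.card ↥(S ×ˢ T) = Nat.card ↥S * Nat.card ↥T := by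
  rw [Nat.card_congr (Equiv.Set.prod S T), Nat.card_prod]

private lemma zz_subset_prod {α β : Type*} (S : Set (α × β)) :
    S ⊆ (Prod.fst '' S) ×ˢ (Prod.snd '' S) :=
  fun p hp => ⟨⟨p, hp, rfl⟩, ⟨p, hp, rfl⟩⟩

/-- maximum size of an intersecting set -/
private noncomputable def maxIC {V : Type*} (G : Subgroup (Equiv.Perm V)) : ℕ :=
  sSup {n | ∃ I : Set G, IsIntersecting G I ∧ Nat.card I = n}

variable {V : Type*} [Fintype V] {G : Subgroup (Equiv.Perm V)}

private lemma zz_card_le_maxIC {I : Set G} (hI : IsIntersecting G I) :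
    Nat.card I ≤ maxIC G := by
  refine le_csSup ⟨Nat.card G, ?_⟩ ⟨I, hI, rfl⟩
  rintro n ⟨J, -, rfl⟩
  rw [Nat.card_coe_set_eq]
  calc J.ncard ≤ (Set.univ : Set G).ncard := ncard_le_ncard (subset_univ J)
    _ = Nat.card G := ncard_univ _

private lemma zz_exists_max (G : Subgroup (Equiv.Perm V)) :
    ∃ I : Set G, IsIntersecting G I ∧ Nat.card I = maxIC G := by
  have h : maxIC G ∈ {n | ∃ I : Set G, IsIntersecting G I ∧ Nat.card I = n} := by
    refine Nat.sSup_mem ⟨0, ∅, fun g hg => absurd hg (Set.notMem_empty g), by simp⟩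
      ⟨Nat.card G, ?_⟩
    rintro n ⟨J, -, rfl⟩
    rw [Nat.card_coe_set_eq]
    calc J.ncard ≤ (Set.univ : Set G).ncard := ncard_le_ncard (subset_univ J)
      _ = Nat.card G := ncard_univ _
  exact h

private lemma zz_stab_intersecting (v : V) : IsIntersecting G (stabSet G v) :=
  fun g hg h hh => ⟨v, by rw [hg, hh]⟩

private lemma zz_one_mem_stab (v : V) : (1 : G) ∈ stabSet G v := by
  simp [stabSet]

private lemma zz_stab_card_pos (v : V) : 0 < Nat.card (stabSet G v) := by
  rw [Nat.card_coe_set_eq, Set.ncard_pos]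
  exact ⟨1, zz_one_mem_stab v⟩

private lemma zz_smul_intersecting {I : Set G} (hI : IsIntersecting G I) (a : G) :
    IsIntersecting G ((fun g => a * g) '' I) := by
  rintro - ⟨g, hg, rfl⟩ - ⟨h, hh, rfl⟩
  obtain ⟨v, hv⟩ := hI g hg h hh
  exact ⟨v, by simp [hv]⟩

private lemma zz_card_smul (a : G) (S : Set G) :
    Nat.card ((fun g => a * g) '' S) = Nat.card S := by
  rw [Nat.card_coe_set_eq, Nat.card_coe_set_eq]
  exact ncard_image_of_injective S (mul_right_injective a)

private lemma zz_maxIC_eq_stab (hs : HasStrictEKR G) [Nonempty V] :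
    ∃ v : V, maxIC G = Nat.card (stabSet G v) := by
  obtain ⟨I, hI, hIc⟩ := zz_exists_max G
  obtain ⟨v, a, rfl⟩ := hs I hI (fun J hJ => (zz_card_le_maxIC hJ).trans hIc.symm.le)
  exact ⟨v, by rw [← hIc, zz_card_smul]⟩

private lemma zz_not_strict_of_isEmpty {V : Type*} [IsEmpty V] (G : Subgroup (Equiv.Perm V)) :
    ¬ HasStrictEKR G := by
  intro hs
  obtain ⟨v, -⟩ := hs ∅ (fun g hg => absurd hg (Set.notMem_empty g))
    (fun J hJ => by
      have hJe : J = ∅ := by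
        ext g
        simp only [Set.mem_empty_iff_false, iff_false]
        intro hg
        obtain ⟨v, -⟩ := hJ g hg g hg
        exact IsEmpty.false v
      simp [hJe])
  exact IsEmpty.false v

end EKRAuxZZ
section EKRAuxZZ2

open Set

variable {V W : Type*} [Nonempty V] [Nonempty W]
  (G : Subgroup (Equiv.Perm V)) (H : Subgroup (Equiv.Perm W))

private lemma zz_permProdCongrHom_inj :
    Function.Injective (permProdCongrHom V W) := by
  rintro ⟨g, h⟩ ⟨g', h'⟩ heq
  have key : ∀ p : V × W, g p.1 = g' p.1 ∧ h p.2 = h' p.2 := by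
    intro p
    have := Equiv.ext_iff.1 heq p
    simpa [permProdCongrHom, Prod.map_apply, Prod.ext_iff] using this
  obtain ⟨v0⟩ := ‹Nonempty V›
  obtain ⟨w0⟩ := ‹Nonempty W›
  refine Prod.ext (Equiv.ext fun v => ?_) (Equiv.ext fun w => ?_)
  · exact (key (v, w0)).1
  · exact (key (v0, w)).2

/-- The monoid hom `G × H →* extProd G H`. -/
private def zzHom : (G × H) →* extProd G H :=
  MonoidHom.codRestrict ((permProdCongrHom V W).comp ((G.subtype).prodMap (H.subtype)))
    (extProd G H) (fun p => ⟨(p.1, p.2), ⟨p.1.2, p.2.2⟩, rfl⟩)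

private lemma zzHom_bij : Function.Bijective (zzHom G H) := by
  constructor
  · intro p q hpq
    have h2 : (permProdCongrHom V W) (↑p.1, ↑p.2) = (permProdCongrHom V W) (↑q.1, ↑q.2) :=
      congrArg Subtype.val hpq
    have h3 := zz_permProdCongrHom_inj h2
    obtain ⟨h4, h5⟩ := Prod.ext_iff.1 h3
    exact Prod.ext (Subtype.ext h4) (Subtype.ext h5)
  · rintro ⟨σ, ⟨g, h⟩, ⟨hg, hh⟩, rfl⟩
    exact ⟨(⟨g, hg⟩, ⟨h, hh⟩), rfl⟩

/-- The group isomorphism `ψ : G × H ≃* extProd G H`. -/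
private noncomputable def zzPsi : (G × H) ≃* extProd G H :=
  MulEquiv.ofBijective (zzHom G H) (zzHom_bij G H)

private lemma zzPsi_coe (p : G × H) :
    ((zzPsi G H p : extProd G H) : Equiv.Perm (V × W)) =
      Equiv.prodCongr (p.1 : Equiv.Perm V) (p.2 : Equiv.Perm W) := rfl

private lemma zzPsi_apply (p : G × H) (q : V × W) :
    ((zzPsi G H p : extProd G H) : Equiv.Perm (V × W)) q = ((p.1 : Equiv.Perm V) q.1, (p.2 : Equiv.Perm W) q.2) := rfl

variable {G H}

/-- products of intersecting sets are intersecting -/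
private lemma zz_prod_intersecting {I : Set G} {K : Set H}
    (hI : IsIntersecting G I) (hK : IsIntersecting H K) :
    IsIntersecting (extProd G H) (zzPsi G H '' (I ×ˢ K)) := by
  rintro - ⟨⟨g, h⟩, ⟨hg, hh⟩, rfl⟩ - ⟨⟨g', h'⟩, ⟨hg', hh'⟩, rfl⟩
  obtain ⟨v, hv⟩ := hI g hg g' hg'
  obtain ⟨w, hw⟩ := hK h hh h' hh'
  exact ⟨(v, w), by rw [zzPsi_apply, zzPsi_apply, hv, hw]⟩

private lemma zz_fst_intersecting {I : Set (extProd G H)}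
    (hI : IsIntersecting (extProd G H) I) :
    IsIntersecting G (Prod.fst '' (zzPsi G H ⁻¹' I)) := by
  rintro - ⟨⟨g, h⟩, hp, rfl⟩ - ⟨⟨g', h'⟩, hq, rfl⟩
  obtain ⟨⟨v, w⟩, hvw⟩ := hI _ hp _ hq
  rw [zzPsi_apply, zzPsi_apply] at hvw
  exact ⟨v, (Prod.ext_iff.1 hvw).1⟩

private lemma zz_snd_intersecting {I : Set (extProd G H)}
    (hI : IsIntersecting (extProd G H) I) :
    IsIntersecting H (Prod.snd '' (zzPsi G H ⁻¹' I)) := by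
  rintro - ⟨⟨g, h⟩, hp, rfl⟩ - ⟨⟨g', h'⟩, hq, rfl⟩
  obtain ⟨⟨v, w⟩, hvw⟩ := hI _ hp _ hq
  rw [zzPsi_apply, zzPsi_apply] at hvw
  exact ⟨w, (Prod.ext_iff.1 hvw).2⟩

private lemma zz_stab_prod (v : V) (w : W) :
    zzPsi G H '' (stabSet G v ×ˢ stabSet H w) = stabSet (extProd G H) (v, w) := by
  ext σ
  constructor
  · rintro ⟨⟨g', h'⟩, ⟨hg, hh⟩, rfl⟩
    show ((zzPsi G H (g', h') : extProd G H) : Equiv.Perm (V × W)) (v, w) = (v, w)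
    rw [zzPsi_apply]
    exact Prod.ext hg hh
  · intro hmem
    obtain ⟨⟨g, h⟩, rfl⟩ := (zzPsi G H).surjective σ
    have : ((zzPsi G H (g, h) : extProd G H) : Equiv.Perm (V × W)) (v, w) = (v, w) := hmem
    rw [zzPsi_apply] at this
    obtain ⟨h1, h2⟩ := Prod.ext_iff.1 this
    exact ⟨(g, h), ⟨h1, h2⟩, rfl⟩

private lemma zz_smul_prod (a : G) (b : H) (S : Set G) (T : Set H) :
    (fun p : G × H => ((a, b) : G × H) * p) '' (S ×ˢ T)
      = ((fun g => a * g) '' S) ×ˢ ((fun h => b * h) '' T) := by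
  ext ⟨g, h⟩
  constructor
  · rintro ⟨⟨p, q⟩, ⟨hp, hq⟩, heq⟩
    obtain ⟨h1, h2⟩ := Prod.ext_iff.1 heq
    exact ⟨⟨p, hp, h1⟩, ⟨q, hq, h2⟩⟩
  · rintro ⟨⟨p, hp, h1⟩, ⟨q, hq, h2⟩⟩
    exact ⟨(p, q), ⟨hp, hq⟩, Prod.ext h1 h2⟩

private lemma zz_psi_smul (a : G) (b : H) (S : Set (G × H)) :
    zzPsi G H '' ((fun p => ((a, b) : G × H) * p) '' S)
      = (fun σ => (zzPsi G H (a, b)) * σ) '' (zzPsi G H '' S) := by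
  rw [Set.image_image, Set.image_image]
  exact Set.image_congr (fun p _ => map_mul (zzPsi G H) (a, b) p)

private lemma zz_card_psi (S : Set (G × H)) :
    Nat.card (zzPsi G H '' S) = Nat.card S := by
  rw [Nat.card_coe_set_eq, Nat.card_coe_set_eq]
  exact Set.ncard_image_of_injective S (zzPsi G H).injective

end EKRAuxZZ2
/-- For transitive permutation groups `G ≤ Sym(V)` and `H ≤ Sym(W)` on
finite sets, the external direct product `G × H` has the strict-EKR-property iff both `G`
and `H` have the strict-EKR-property. -/
theorem hasStrictEKR_extProd_iff {V W : Type*} [Fintype V] [Fintype W]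
    (G : Subgroup (Equiv.Perm V)) (H : Subgroup (Equiv.Perm W))
    (hG : IsTransitive G) (hH : IsTransitive H) :
    HasStrictEKR (extProd G H) ↔ HasStrictEKR G ∧ HasStrictEKR H := by
  classical
  rcases isEmpty_or_nonempty V with hV | hV
  · haveI := hV
    constructor
    · intro h; exact absurd h (zz_not_strict_of_isEmpty _)
    · rintro ⟨hg, -⟩; exact absurd hg (zz_not_strict_of_isEmpty _)
  rcases isEmpty_or_nonempty W with hW | hW
  · haveI := hW
    constructor
    · intro h; exact absurd h (zz_not_strict_of_isEmpty _)
    · rintro ⟨-, hh⟩; exact absurd hh (zz_not_strict_of_isEmpty _)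
  haveI := hV; haveI := hW
  constructor
  · intro hP
    constructor
    · -- G has strict EKR
      intro I hI hImax
      obtain ⟨K, hK, hKc⟩ := zz_exists_max H
      have hKpos : 0 < Nat.card K := by
        rw [hKc]
        obtain ⟨w0⟩ := hW
        exact lt_of_lt_of_le (zz_stab_card_pos w0)
          (zz_card_le_maxIC (zz_stab_intersecting w0))
      have hKne : K.Nonempty := by
        rw [Nat.card_coe_set_eq] at hKpos
        exact Set.nonempty_of_ncard_ne_zero hKpos.ne'
      have hL : IsIntersecting (extProd G H) (zzPsi G H '' (I ×ˢ K)) :=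
        zz_prod_intersecting hI hK
      have hLmax : ∀ L' : Set (extProd G H), IsIntersecting (extProd G H) L' →
          Nat.card L' ≤ Nat.card (zzPsi G H '' (I ×ˢ K)) := by
        intro L' hL'
        rw [zz_card_psi, zz_ncard_prod]
        have h1 : Nat.card L' = Nat.card (zzPsi G H ⁻¹' L') := by
          conv_lhs => rw [← Set.image_preimage_eq L' (zzPsi G H).surjective]
          rw [zz_card_psi]
        rw [h1]
        calc Nat.card (zzPsi G H ⁻¹' L')
            ≤ Nat.card ((Prod.fst '' (zzPsi G H ⁻¹' L')) ×ˢ (Prod.snd '' (zzPsi G H ⁻¹' L'))) := by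
              rw [Nat.card_coe_set_eq, Nat.card_coe_set_eq]
              exact Set.ncard_le_ncard (zz_subset_prod _)
          _ = Nat.card (Prod.fst '' (zzPsi G H ⁻¹' L')) * Nat.card (Prod.snd '' (zzPsi G H ⁻¹' L')) :=
              zz_ncard_prod _ _
          _ ≤ Nat.card I * Nat.card K := by
              refine Nat.mul_le_mul (hImax _ (zz_fst_intersecting hL')) ?_
              rw [hKc]
              exact zz_card_le_maxIC (zz_snd_intersecting hL')
      obtain ⟨⟨v, w⟩, A, hEq⟩ := hP _ hL hLmax
      obtain ⟨⟨a, b⟩, rfl⟩ := (zzPsi G H).surjective A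
      rw [← zz_stab_prod v w, ← zz_psi_smul, zz_smul_prod] at hEq
      have hEq2 : I ×ˢ K
          = ((fun g => a * g) '' stabSet G v) ×ˢ ((fun h => b * h) '' stabSet H w) :=
        (Set.image_injective.2 (zzPsi G H).injective) hEq
      refine ⟨v, a, ?_⟩
      have hTne : ((fun h => b * h) '' stabSet H w).Nonempty :=
        ⟨b * 1, 1, zz_one_mem_stab w, rfl⟩
      calc I = Prod.fst '' (I ×ˢ K) := (Set.fst_image_prod I hKne).symm
        _ = (fun g => a * g) '' stabSet G v := by rw [hEq2]; exact Set.fst_image_prod _ hTne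
    · -- H has strict EKR
      intro I hI hImax
      obtain ⟨K, hK, hKc⟩ := zz_exists_max G
      have hKpos : 0 < Nat.card K := by
        rw [hKc]
        obtain ⟨v0⟩ := hV
        exact lt_of_lt_of_le (zz_stab_card_pos v0)
          (zz_card_le_maxIC (zz_stab_intersecting v0))
      have hKne : K.Nonempty := by
        rw [Nat.card_coe_set_eq] at hKpos
        exact Set.nonempty_of_ncard_ne_zero hKpos.ne'
      have hL : IsIntersecting (extProd G H) (zzPsi G H '' (K ×ˢ I)) :=
        zz_prod_intersecting hK hI
      have hLmax : ∀ L' : Set (extProd G H), IsIntersecting (extProd G H) L' →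
          Nat.card L' ≤ Nat.card (zzPsi G H '' (K ×ˢ I)) := by
        intro L' hL'
        rw [zz_card_psi, zz_ncard_prod]
        have h1 : Nat.card L' = Nat.card (zzPsi G H ⁻¹' L') := by
          conv_lhs => rw [← Set.image_preimage_eq L' (zzPsi G H).surjective]
          rw [zz_card_psi]
        rw [h1]
        calc Nat.card (zzPsi G H ⁻¹' L')
            ≤ Nat.card ((Prod.fst '' (zzPsi G H ⁻¹' L')) ×ˢ (Prod.snd '' (zzPsi G H ⁻¹' L'))) := by
              rw [Nat.card_coe_set_eq, Nat.card_coe_set_eq]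
              exact Set.ncard_le_ncard (zz_subset_prod _)
          _ = Nat.card (Prod.fst '' (zzPsi G H ⁻¹' L')) * Nat.card (Prod.snd '' (zzPsi G H ⁻¹' L')) :=
              zz_ncard_prod _ _
          _ ≤ Nat.card K * Nat.card I := by
              refine Nat.mul_le_mul ?_ (hImax _ (zz_snd_intersecting hL'))
              rw [hKc]
              exact zz_card_le_maxIC (zz_fst_intersecting hL')
      obtain ⟨⟨v, w⟩, A, hEq⟩ := hP _ hL hLmax
      obtain ⟨⟨a, b⟩, rfl⟩ := (zzPsi G H).surjective A
      rw [← zz_stab_prod v w, ← zz_psi_smul, zz_smul_prod] at hEq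
      have hEq2 : K ×ˢ I
          = ((fun g => a * g) '' stabSet G v) ×ˢ ((fun h => b * h) '' stabSet H w) :=
        (Set.image_injective.2 (zzPsi G H).injective) hEq
      refine ⟨w, b, ?_⟩
      have hSne : ((fun g => a * g) '' stabSet G v).Nonempty :=
        ⟨a * 1, 1, zz_one_mem_stab v, rfl⟩
      calc I = Prod.snd '' (K ×ˢ I) := (Set.snd_image_prod hKne I).symm
        _ = (fun h => b * h) '' stabSet H w := by rw [hEq2]; exact Set.snd_image_prod hSne _
  · rintro ⟨hGs, hHs⟩
    intro I hI hImax
    set J := zzPsi G H ⁻¹' I with hJdef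
    have hIJ : I = zzPsi G H '' J := (Set.image_preimage_eq I (zzPsi G H).surjective).symm
    set J1 := Prod.fst '' J with hJ1def
    set J2 := Prod.snd '' J with hJ2def
    have hJ1 : IsIntersecting G J1 := zz_fst_intersecting hI
    have hJ2 : IsIntersecting H J2 := zz_snd_intersecting hI
    obtain ⟨v0, hv0⟩ := zz_maxIC_eq_stab hGs
    obtain ⟨w0, hw0⟩ := zz_maxIC_eq_stab hHs
    have hmGpos : 0 < maxIC G := by rw [hv0]; exact zz_stab_card_pos v0
    have hmHpos : 0 < maxIC H := by rw [hw0]; exact zz_stab_card_pos w0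
    have hlow : maxIC G * maxIC H ≤ Nat.card I := by
      have := hImax _ (zz_prod_intersecting (zz_stab_intersecting v0) (zz_stab_intersecting w0))
      rwa [zz_card_psi, zz_ncard_prod, ← hv0, ← hw0] at this
    have hcardJ : Nat.card J = Nat.card I := by rw [hIJ, zz_card_psi]
    have hsub : J ⊆ J1 ×ˢ J2 := zz_subset_prod J
    have hup : Nat.card J ≤ Nat.card J1 * Nat.card J2 := by
      rw [← zz_ncard_prod, Nat.card_coe_set_eq, Nat.card_coe_set_eq]
      exact Set.ncard_le_ncard hsub
    have hJ1le : Nat.card J1 ≤ maxIC G := zz_card_le_maxIC hJ1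
    have hJ2le : Nat.card J2 ≤ maxIC H := zz_card_le_maxIC hJ2
    have hprodeq : Nat.card J1 * Nat.card J2 = maxIC G * maxIC H :=
      le_antisymm (Nat.mul_le_mul hJ1le hJ2le) (hlow.trans ((hcardJ.symm.le).trans hup))
    have hJ2eq : Nat.card J2 = maxIC H := by
      have h1 : maxIC G * maxIC H ≤ maxIC G * Nat.card J2 := by
        calc maxIC G * maxIC H = Nat.card J1 * Nat.card J2 := hprodeq.symm
          _ ≤ maxIC G * Nat.card J2 := Nat.mul_le_mul_right _ hJ1le
      exact le_antisymm hJ2le (Nat.le_of_mul_le_mul_left h1 hmGpos)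
    have hJ1eq : Nat.card J1 = maxIC G := by
      have h2 := hprodeq
      rw [hJ2eq] at h2
      exact Nat.eq_of_mul_eq_mul_right hmHpos h2
    have hJeq : J = J1 ×ˢ J2 := by
      apply Set.eq_of_subset_of_ncard_le hsub
      rw [← Nat.card_coe_set_eq, ← Nat.card_coe_set_eq, zz_ncard_prod, hJ1eq, hJ2eq,
        hcardJ]
      exact hlow
    obtain ⟨v, a, hJ1c⟩ := hGs J1 hJ1 (fun J' hJ' => (zz_card_le_maxIC hJ').trans hJ1eq.ge)
    obtain ⟨w, b, hJ2c⟩ := hHs J2 hJ2 (fun J' hJ' => (zz_card_le_maxIC hJ').trans hJ2eq.ge)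
    refine ⟨(v, w), zzPsi G H (a, b), ?_⟩
    rw [hIJ, hJeq, hJ1c, hJ2c, ← zz_smul_prod, zz_psi_smul, zz_stab_prod]
end

section
/- Let X be a finite vertex-transitive simple graph and n ≥ 1. Then the independence number of the n-fold tensor (direct) product X × X × ⋯ × X equals α(X)·|V(X)|^{n-1}. -/
section IndepAux
variable {γ : Type*} [Finite γ] (X : SimpleGraph γ)

lemma indep_bddAbove : BddAbove {k : ℕ | ∃ A : Set γ, IsIndep X A ∧ Nat.card A = k} := by
  refine ⟨Nat.card γ, ?_⟩
  rintro k ⟨A, -, rfl⟩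
  exact Nat.card_le_card_of_injective (Subtype.val : A → γ) Subtype.val_injective

omit [Finite γ] in
lemma indep_nonempty : {k : ℕ | ∃ A : Set γ, IsIndep X A ∧ Nat.card A = k}.Nonempty :=
  ⟨0, ∅, fun a ha => absurd ha (Set.notMem_empty a), by simp⟩

lemma le_indepNum {A : Set γ} (hA : IsIndep X A) : Nat.card A ≤ indepNum X :=
  le_csSup (indep_bddAbove X) ⟨A, hA, rfl⟩

omit [Finite γ] in
lemma indepNum_le {m : ℕ} (h : ∀ A : Set γ, IsIndep X A → Nat.card A ≤ m) : indepNum X ≤ m :=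
  csSup_le (indep_nonempty X) (by rintro k ⟨A, hA, rfl⟩; exact h A hA)

lemma exists_indep_card : ∃ A : Set γ, IsIndep X A ∧ Nat.card A = indepNum X :=
  Nat.sSup_mem (indep_nonempty X) (indep_bddAbove X)

end IndepAux

section Main
open Finset
variable {α : Type*} [Fintype α] (X : SimpleGraph α)

lemma card_fiber_eq (hX : IsVertexTransitive X) (a b a' b' : α) :
    Nat.card {e : X ≃g X // e a = b} = Nat.card {e : X ≃g X // e a' = b'} := by
  obtain ⟨e₁, he₁⟩ := hX a' a
  obtain ⟨e₂, he₂⟩ := hX b b'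
  refine Nat.card_congr ⟨fun p => ⟨(e₂.comp p.1).comp e₁, by simp [he₁, p.2, he₂]⟩,
    fun p => ⟨(e₂.symm.comp p.1).comp e₁.symm, by simp [← he₁, p.2, ← he₂]⟩, ?_, ?_⟩
  · rintro ⟨e, he⟩; ext x; simp
  · rintro ⟨e, he⟩; ext x; simp

lemma tensor_lower (m : ℕ) :
    indepNum X * Fintype.card α ^ m ≤ indepNum (tensorPi fun _ : Fin (m + 1) => X) := by
  obtain ⟨A, hA, hcard⟩ := exists_indep_card X
  set B : Set (Fin (m + 1) → α) := {f | f 0 ∈ A} with hBdef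
  have hB : IsIndep (tensorPi fun _ => X) B := fun f hf g hg hadj => hA _ hf _ hg ((show f ≠ g ∧ ∀ i, X.Adj (f i) (g i) from hadj).2 0)
  refine le_trans ?_ (le_indepNum _ hB)
  have e2 : {p : α × (Fin m → α) // p.1 ∈ A} ≃ A × (Fin m → α) :=
    { toFun := fun p => (⟨p.1.1, p.2⟩, p.1.2)
      invFun := fun q => ⟨(q.1.1, q.2), q.1.2⟩
      left_inv := fun p => rfl
      right_inv := fun q => rfl }
  have e : B ≃ A × (Fin m → α) :=
    ((Fin.consEquiv fun _ => α).symm.subtypeEquiv fun f => Iff.rfl).trans e2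
  rw [Nat.card_congr e, Nat.card_prod, hcard, Nat.card_eq_fintype_card (α := Fin m → α),
    Fintype.card_fun, Fintype.card_fin]

lemma tensor_upper [Nonempty α] (hX : IsVertexTransitive X) (m : ℕ)
    (A : Set (Fin (m + 1) → α)) (hA : IsIndep (tensorPi fun _ : Fin (m + 1) => X) A) :
    Nat.card A ≤ indepNum X * Fintype.card α ^ m := by
  classical
  have hfin : Finite (X ≃g X) :=
    Finite.of_injective (fun e => (e : α → α)) DFunLike.coe_injective
  have hfty : Fintype (X ≃g X) := Fintype.ofFinite _
  obtain ⟨a₀⟩ := ‹Nonempty α›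
  set c := Fintype.card {e : X ≃g X // e a₀ = a₀} with hc
  have hcpos : 0 < c := Fintype.card_pos_iff.mpr ⟨⟨SimpleGraph.Iso.refl, rfl⟩⟩
  have K1 : ∀ a b : α, Fintype.card {e : X ≃g X // e a = b} = c := fun a b => by
    rw [hc, ← Nat.card_eq_fintype_card, ← Nat.card_eq_fintype_card]
    exact card_fiber_eq X hX a b a₀ a₀
  have K2 : Fintype.card (X ≃g X) = c * Fintype.card α := by
    rw [← Fintype.card_congr (Equiv.sigmaFiberEquiv (fun e : X ≃g X => e a₀)),
      Fintype.card_sigma]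
    simp [K1, mul_comm]
  set vec : (Fin (m+1) → X ≃g X) → α → (Fin (m+1) → α) := fun g x i => g i x with hvec
  -- each slice is independent in X
  have hup : ∀ g : Fin (m+1) → X ≃g X, (univ.filter (fun x : α => vec g x ∈ A)).card ≤ indepNum X := by
    intro g
    rw [← Fintype.card_subtype, ← Nat.card_eq_fintype_card]
    apply le_indepNum
    intro x hx y hy hadj
    refine hA _ hx _ hy (show vec g x ≠ vec g y ∧ ∀ i, X.Adj (vec g x i) (vec g y i) from ⟨?_, fun i => (g i).map_adj_iff.mpr hadj⟩)
    intro hxy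
    have h0 : g 0 x = g 0 y := congrFun hxy 0
    exact X.loopless.irrefl y (by rwa [(g 0).toEquiv.injective h0] at hadj)
  -- count fibers over x
  have hxcount : ∀ x : α, (univ.filter (fun g : Fin (m+1) → X ≃g X => vec g x ∈ A)).card
      = A.toFinset.card * c ^ (m+1) := by
    intro x
    rw [Finset.card_eq_sum_card_fiberwise (f := fun g => vec g x) (t := A.toFinset)
      (fun g hg => by simpa using (Finset.mem_filter.mp hg).2)]
    have hfib : ∀ f ∈ A.toFinset,
        (Finset.filter (fun g => vec g x = f) (univ.filter (fun g => vec g x ∈ A))).card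
          = c ^ (m+1) := by
      intro f hf
      have h1 : (Finset.filter (fun g => vec g x = f) (univ.filter (fun g => vec g x ∈ A)))
          = univ.filter (fun g => vec g x = f) := by
        rw [Finset.filter_filter]
        apply Finset.filter_congr
        intro g _
        constructor
        · rintro ⟨-, h⟩; exact h
        · intro h; exact ⟨h ▸ Set.mem_toFinset.mp hf, h⟩
      rw [h1, ← Fintype.card_subtype]
      have e1 : {g : Fin (m+1) → X ≃g X // vec g x = f} ≃ ∀ i, {e : X ≃g X // e x = f i} :=
        (Equiv.subtypeEquivRight (q := fun g => ∀ i, g i x = f i)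
          (fun g => by simp [hvec, funext_iff])).trans
          (Equiv.subtypePiEquivPi (p := fun i (e : X ≃g X) => e x = f i))
      rw [Fintype.card_congr e1, Fintype.card_pi]
      simp [K1]
    rw [Finset.sum_congr rfl hfib, Finset.sum_const, Set.toFinset_card, smul_eq_mul,
      Fintype.card_subtype]
  have S1 : ∑ g : Fin (m+1) → X ≃g X, (univ.filter (fun x : α => vec g x ∈ A)).card
      = ∑ x : α, (univ.filter (fun g : Fin (m+1) → X ≃g X => vec g x ∈ A)).card := by
    simp only [Finset.card_filter]
    rw [Finset.sum_comm]
  have SU : ∑ g : Fin (m+1) → X ≃g X, (univ.filter (fun x : α => vec g x ∈ A)).card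
      ≤ (c * Fintype.card α) ^ (m+1) * indepNum X := by
    calc ∑ g : Fin (m+1) → X ≃g X, (univ.filter (fun x : α => vec g x ∈ A)).card
        ≤ ∑ _g : Fin (m+1) → X ≃g X, indepNum X := Finset.sum_le_sum fun g _ => hup g
      _ = (c * Fintype.card α) ^ (m+1) * indepNum X := by
          rw [Finset.sum_const, smul_eq_mul, Finset.card_univ, Fintype.card_fun,
            Fintype.card_fin, K2]
  have SL : ∑ x : α, (univ.filter (fun g : Fin (m+1) → X ≃g X => vec g x ∈ A)).card
      = Fintype.card α * (A.toFinset.card * c ^ (m+1)) := by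
    rw [Finset.sum_congr rfl fun x _ => hxcount x, Finset.sum_const, smul_eq_mul,
      Finset.card_univ]
  have key : Fintype.card α * (Nat.card A * c ^ (m+1))
      ≤ (c * Fintype.card α) ^ (m+1) * indepNum X := by
    have hNA : Nat.card A = A.toFinset.card := by
      rw [Nat.card_eq_fintype_card, Set.toFinset_card]
    rw [hNA, ← SL, ← S1]; exact SU
  have hαpos : 0 < Fintype.card α := Fintype.card_pos
  have key2 : Nat.card A * (c ^ (m+1) * Fintype.card α)
      ≤ (indepNum X * Fintype.card α ^ m) * (c ^ (m+1) * Fintype.card α) := by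
    calc Nat.card A * (c ^ (m+1) * Fintype.card α)
        = Fintype.card α * (Nat.card A * c ^ (m+1)) := by ring
      _ ≤ (c * Fintype.card α) ^ (m+1) * indepNum X := key
      _ = (indepNum X * Fintype.card α ^ m) * (c ^ (m+1) * Fintype.card α) := by
          ring
  exact Nat.le_of_mul_le_mul_right key2 (by positivity)

end Main


/-- For a finite vertex-transitive simple graph `X` and `n ≥ 1`, the
independence number of the `n`-fold tensor product `X × ⋯ × X` equals
`α(X) * |V(X)| ^ (n - 1)`. -/
theorem indepNum_tensorPow {α : Type*} [Fintype α] (X : SimpleGraph α)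
    (hX : IsVertexTransitive X) (n : ℕ) (hn : 1 ≤ n) :
    indepNum (tensorPi (fun _ : Fin n => X)) = indepNum X * Fintype.card α ^ (n - 1) := by
  obtain ⟨m, rfl⟩ : ∃ m, n = m + 1 := ⟨n - 1, by omega⟩
  simp only [Nat.add_sub_cancel]
  cases isEmpty_or_nonempty α with
  | inl h =>
    have h1 : indepNum X = 0 :=
      Nat.le_zero.mp (indepNum_le X fun A _ => by simp [Nat.card_of_isEmpty])
    have h2 : indepNum (tensorPi fun _ : Fin (m + 1) => X) = 0 :=
      Nat.le_zero.mp (indepNum_le _ fun A _ => by simp [Nat.card_of_isEmpty])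
    simp [h1, h2]
  | inr h =>
    refine le_antisymm ?_ (tensor_lower X m)
    exact indepNum_le _ fun A hA => tensor_upper X hX m A hA
end

section
/- Let G ≤ Sym(V) and H ≤ Sₙ be transitive permutation groups, and let G ≀ H act on V × {1,…,n} by ((g₁,…,gₙ),h)·(a,i) = (g_i(a), h(i)). Then the intersection densities satisfy ρ(G) ≤ ρ(G ≀ H) ≤ ρ(G)·ρ(H). -/
-- max intersecting size
noncomputable def maxInter {V : Type*} (G : Subgroup (Equiv.Perm V)) : ℕ :=
  sSup {k : ℕ | ∃ I : Set G, IsIntersecting G I ∧ Nat.card I = k}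

lemma empty_intersecting {V : Type*} (G : Subgroup (Equiv.Perm V)) :
    IsIntersecting G (∅ : Set G) := fun _ hg => hg.elim

lemma maxInter_bdd {V : Type*} [Finite V] (G : Subgroup (Equiv.Perm V)) :
    ∀ k ∈ {k : ℕ | ∃ I : Set G, IsIntersecting G I ∧ Nat.card I = k}, k ≤ Nat.card G := by
  rintro k ⟨I, -, rfl⟩
  exact Nat.card_le_card_of_injective _ Subtype.val_injective

lemma le_maxInter {V : Type*} [Finite V] (G : Subgroup (Equiv.Perm V)) (I : Set G)
    (hI : IsIntersecting G I) : Nat.card I ≤ maxInter G :=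
  le_csSup ⟨Nat.card G, maxInter_bdd G⟩ ⟨I, hI, rfl⟩

lemma exists_maxInter {V : Type*} [Finite V] (G : Subgroup (Equiv.Perm V)) :
    ∃ I : Set G, IsIntersecting G I ∧ Nat.card I = maxInter G :=
  Nat.sSup_mem (s := {k : ℕ | ∃ I : Set G, IsIntersecting G I ∧ Nat.card I = k})
    ⟨0, ∅, empty_intersecting G, by simp⟩ ⟨Nat.card G, maxInter_bdd G⟩

lemma one_mem_stabSet {V : Type*} (G : Subgroup (Equiv.Perm V)) (v : V) :
    (1 : G) ∈ stabSet G v := by simp [stabSet]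

lemma stabSet_card_pos {V : Type*} [Finite V] (G : Subgroup (Equiv.Perm V)) (v : V) :
    0 < Nat.card (stabSet G v) :=
  @Nat.card_pos _ ⟨⟨1, one_mem_stabSet G v⟩⟩ _

lemma zero_mem_densSet {V : Type*} [Nonempty V] (G : Subgroup (Equiv.Perm V)) :
    (0 : ℝ) ∈ {x : ℝ | ∃ (I : Set G) (v : V), IsIntersecting G I ∧
      x = (Nat.card I : ℝ) / (Nat.card (stabSet G v) : ℝ)} :=
  ⟨∅, Classical.arbitrary V, empty_intersecting G, by simp⟩

lemma bddAbove_densSet {V : Type*} [Finite V] (G : Subgroup (Equiv.Perm V)) :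
    BddAbove {x : ℝ | ∃ (I : Set G) (v : V), IsIntersecting G I ∧
      x = (Nat.card I : ℝ) / (Nat.card (stabSet G v) : ℝ)} := by
  refine ⟨(Nat.card G : ℝ), ?_⟩
  rintro x ⟨I, v, hI, rfl⟩
  have h1 : (1 : ℝ) ≤ (Nat.card (stabSet G v) : ℝ) := by
    exact_mod_cast stabSet_card_pos G v
  calc (Nat.card I : ℝ) / (Nat.card (stabSet G v) : ℝ)
      ≤ (Nat.card I : ℝ) := div_le_self (by positivity) h1
    _ ≤ (Nat.card G : ℝ) := by
        exact_mod_cast Nat.card_le_card_of_injective _ (Subtype.val_injective (p := (· ∈ I)))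

lemma interDensity_nonneg {V : Type*} [Finite V] [Nonempty V] (G : Subgroup (Equiv.Perm V)) :
    0 ≤ interDensity G := le_csSup (bddAbove_densSet G) (zero_mem_densSet G)

lemma card_fiber_sum {γ β : Type*} [Finite γ] [Fintype β] (S : Set γ) (f : γ → β) :
    Nat.card S = ∑ b : β, Nat.card {p : S // f ↑p = b} := by
  classical
  letI : Fintype S := Fintype.ofFinite _
  letI : ∀ b, Fintype {p : S // f ↑p = b} := fun b => Fintype.ofFinite _
  rw [Nat.card_congr (Equiv.sigmaFiberEquiv (fun p : S => f ↑p)).symm,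
    Nat.card_eq_fintype_card, Fintype.card_sigma]
  exact Finset.sum_congr rfl fun b _ => (Nat.card_eq_fintype_card).symm

def fibEquivFst {α β : Type*} (S : Set (α × β)) (a : α) :
    {p : S // (↑p : α × β).1 = a} ≃ {b : β | (a, b) ∈ S} where
  toFun p := ⟨(↑p : α × β).2, by
    obtain ⟨⟨⟨x, y⟩, hS⟩, h⟩ := p
    dsimp at h ⊢
    rwa [h] at hS⟩
  invFun b := ⟨⟨(a, ↑b), b.2⟩, rfl⟩
  left_inv := by rintro ⟨⟨⟨x, y⟩, hS⟩, h⟩; dsimp at h; subst h; rfl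
  right_inv := fun b => rfl

def fibEquivSnd {α β : Type*} (S : Set (α × β)) (b : β) :
    {p : S // (↑p : α × β).2 = b} ≃ {a : α | (a, b) ∈ S} where
  toFun p := ⟨(↑p : α × β).1, by
    obtain ⟨⟨⟨x, y⟩, hS⟩, h⟩ := p
    dsimp at h ⊢
    rwa [h] at hS⟩
  invFun a := ⟨⟨(↑a, b), a.2⟩, rfl⟩
  left_inv := by rintro ⟨⟨⟨x, y⟩, hS⟩, h⟩; dsimp at h; subst h; rfl
  right_inv := fun a => rfl

lemma card_le_fibers_fst {α β : Type*} [Fintype α] [Finite β] (S : Set (α × β)) (M : ℕ)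
    (hfib : ∀ a : α, Nat.card {b : β | (a, b) ∈ S} ≤ M) :
    Nat.card S ≤ Fintype.card α * M := by
  rw [card_fiber_sum S Prod.fst]
  calc ∑ a : α, Nat.card {p : S // (↑p : α × β).1 = a}
      ≤ ∑ _a : α, M := Finset.sum_le_sum fun a _ => by
        rw [Nat.card_congr (fibEquivFst S a)]; exact hfib a
    _ = Fintype.card α * M := by simp [Finset.sum_const, Finset.card_univ, mul_comm]

lemma card_le_fibers_snd {α β : Type*} [Finite α] [Fintype β] (S : Set (α × β)) (M : ℕ)
    (hfib : ∀ b : β, Nat.card {a : α | (a, b) ∈ S} ≤ M) :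
    Nat.card S ≤ Nat.card (Prod.snd '' S) * M := by
  classical
  letI : Fintype (Prod.snd '' S : Set β) := Fintype.ofFinite _
  rw [card_fiber_sum S Prod.snd]
  have himg : ∀ b : β, b ∉ Prod.snd '' S → Nat.card {p : S // (↑p : α × β).2 = b} = 0 := by
    intro b hb
    have : IsEmpty {p : S // (↑p : α × β).2 = b} :=
      ⟨fun ⟨⟨p, hp⟩, h⟩ => hb ⟨p, hp, h⟩⟩
    exact Nat.card_of_isEmpty
  calc ∑ b : β, Nat.card {p : S // (↑p : α × β).2 = b}
      = ∑ b ∈ (Prod.snd '' S).toFinset, Nat.card {p : S // (↑p : α × β).2 = b} :=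
        (Finset.sum_subset (Finset.subset_univ _) (fun b _ hb =>
          himg b (by simpa using hb))).symm
    _ ≤ ∑ _b ∈ (Prod.snd '' S).toFinset, M := Finset.sum_le_sum fun b _ => by
        rw [Nat.card_congr (fibEquivSnd S b)]; exact hfib b
    _ = (Prod.snd '' S).toFinset.card * M := by simp [Finset.sum_const, mul_comm]
    _ = Nat.card (Prod.snd '' S) * M := by rw [Set.toFinset_card, Nat.card_eq_fintype_card]
section Wreath

variable {V : Type*} {n : ℕ} {G : Subgroup (Equiv.Perm V)} {H : Subgroup (Equiv.Perm (Fin n))}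

lemma wreathPerm_apply (g : Fin n → Equiv.Perm V) (h : Equiv.Perm (Fin n)) (v : V) (i : Fin n) :
    wreathPerm g h (v, i) = (g i v, h i) := rfl

lemma wreathPerm_inj [Nonempty V] {g g' : Fin n → Equiv.Perm V} {h h' : Equiv.Perm (Fin n)}
    (e : wreathPerm g h = wreathPerm g' h') : g = g' ∧ h = h' := by
  have key : ∀ (v : V) (i : Fin n), (g i v, h i) = (g' i v, h' i) :=
    fun v i => Equiv.ext_iff.mp e (v, i)
  obtain ⟨v⟩ := ‹Nonempty V›
  exact ⟨funext fun i => Equiv.ext fun w => congrArg Prod.fst (key w i),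
    Equiv.ext fun i => congrArg Prod.snd (key v i)⟩

/-- Parametrization of the wreath product. -/
def wr (G : Subgroup (Equiv.Perm V)) (H : Subgroup (Equiv.Perm (Fin n)))
    (p : (Fin n → G) × H) : wreathProd G H :=
  ⟨wreathPerm (fun i => (p.1 i : Equiv.Perm V)) (p.2 : Equiv.Perm (Fin n)),
    ⟨_, _, fun i => (p.1 i).2, p.2.2, rfl⟩⟩

lemma wr_bijective [Nonempty V] : Function.Bijective (wr G H) := by
  constructor
  · rintro ⟨g, h⟩ ⟨g', h'⟩ e
    have e' : wreathPerm (fun i => (g i : Equiv.Perm V)) (h : Equiv.Perm (Fin n))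
        = wreathPerm (fun i => (g' i : Equiv.Perm V)) (h' : Equiv.Perm (Fin n)) :=
      congrArg Subtype.val e
    obtain ⟨hg, hh⟩ := wreathPerm_inj e'
    refine Prod.ext ?_ (Subtype.ext hh)
    exact funext fun i => Subtype.ext (congrFun hg i)
  · rintro ⟨σ, g, h, hg, hh, rfl⟩
    exact ⟨(fun i => ⟨g i, hg i⟩, ⟨h, hh⟩), rfl⟩

/-- The "product-like" subsets of the wreath product. -/
def wSet (G : Subgroup (Equiv.Perm V)) (H : Subgroup (Equiv.Perm (Fin n))) (i₀ : Fin n)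
    (A : Set G) (B : Set H) : Set (wreathProd G H) :=
  {σ | ∃ (g : Fin n → G) (h : H),
    (σ : Equiv.Perm (V × Fin n)) = wreathPerm (fun i => (g i : Equiv.Perm V)) (h : Equiv.Perm (Fin n))
    ∧ g i₀ ∈ A ∧ h ∈ B}

lemma stabSet_eq_wSet (v : V) (i₀ : Fin n) :
    stabSet (wreathProd G H) (v, i₀) = wSet G H i₀ (stabSet G v) (stabSet H i₀) := by
  ext σ
  constructor
  · intro hσ
    obtain ⟨g, h, hg, hh, e⟩ := σ.2
    have hσ' : (σ : Equiv.Perm (V × Fin n)) (v, i₀) = (v, i₀) := hσ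
    rw [e] at hσ'
    have h1 : g i₀ v = v := congrArg Prod.fst hσ'
    have h2 : h i₀ = i₀ := congrArg Prod.snd hσ'
    exact ⟨fun i => ⟨g i, hg i⟩, ⟨h, hh⟩, e, h1, h2⟩
  · rintro ⟨g, h, e, hA, hB⟩
    show (σ : Equiv.Perm (V × Fin n)) (v, i₀) = (v, i₀)
    rw [e]
    show ((g i₀ : Equiv.Perm V) v, (h : Equiv.Perm (Fin n)) i₀) = (v, i₀)
    rw [show (g i₀ : Equiv.Perm V) v = v from hA, show (h : Equiv.Perm (Fin n)) i₀ = i₀ from hB]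

lemma wSet_intersecting (i₀ : Fin n) (I : Set G) (hI : IsIntersecting G I) :
    IsIntersecting (wreathProd G H) (wSet G H i₀ I (stabSet H i₀)) := by
  rintro σ ⟨g, h, e, hA, hB⟩ σ' ⟨g', h', e', hA', hB'⟩
  obtain ⟨v, hv⟩ := hI _ hA _ hA'
  refine ⟨(v, i₀), ?_⟩
  rw [e, e']
  show ((g i₀ : Equiv.Perm V) v, (h : Equiv.Perm (Fin n)) i₀)
    = ((g' i₀ : Equiv.Perm V) v, (h' : Equiv.Perm (Fin n)) i₀)
  rw [hv, show (h : Equiv.Perm (Fin n)) i₀ = i₀ from hB,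
    show (h' : Equiv.Perm (Fin n)) i₀ = i₀ from hB']

lemma wSet_card [Fintype V] [Nonempty V] (i₀ : Fin n) (A : Set G) (B : Set H) :
    Nat.card (wSet G H i₀ A B)
      = Nat.card A * (Nat.card G ^ (n - 1) * Nat.card B) := by
  classical
  set θ : A × ({j : Fin n // j ≠ i₀} → G) × B → wSet G H i₀ A B := fun x =>
    ⟨wr G H (fun i => if hi : i = i₀ then (x.1 : G) else x.2.1 ⟨i, hi⟩, (x.2.2 : H)),
      ⟨fun i => if hi : i = i₀ then (x.1 : G) else x.2.1 ⟨i, hi⟩, (x.2.2 : H), rfl,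
        by simp, x.2.2.2⟩⟩ with hθ
  have hbij : Function.Bijective θ := by
    constructor
    · rintro ⟨s, g, b⟩ ⟨s', g', b'⟩ e
      have e1 : wr G H _ = wr G H _ := Subtype.ext (congrArg Subtype.val (congrArg Subtype.val e))
      have e2 := wr_bijective.1 e1
      have efun := congrArg Prod.fst e2
      have eb : (b : H) = b' := congrArg Prod.snd e2
      refine Prod.ext ?_ (Prod.ext ?_ (Subtype.ext eb))
      · have h1 := congrFun efun i₀
        simp only [dif_pos] at h1
        exact Subtype.ext h1
      · funext j
        have h2 := congrFun efun j.1
        simp only [dif_neg j.2] at h2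
        exact h2
    · rintro ⟨σ, g, h, e, hA, hB⟩
      refine ⟨(⟨g i₀, hA⟩, fun j => g j.1, ⟨h, hB⟩), ?_⟩
      apply Subtype.ext
      apply Subtype.ext
      dsimp only [θ, wr]
      rw [e]
      congr 1
      funext i
      by_cases hi : i = i₀
      · subst hi; simp
      · simp [hi]
  have hcard : Nat.card {j : Fin n // j ≠ i₀} = n - 1 := by
    rw [Nat.card_eq_fintype_card, Fintype.card_subtype_compl, Fintype.card_subtype_eq,
      Fintype.card_fin]
  rw [← Nat.card_eq_of_bijective θ hbij, Nat.card_prod, Nat.card_prod, Nat.card_fun, hcard]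

end Wreath
section Counting

variable {V : Type*} {n : ℕ}

/-- Diagonal-coset averaging: bound for "tensor-intersecting" families in `Gⁿ`. -/
lemma fiber_bound [Fintype V] [Nonempty V] (hn : 0 < n) (G : Subgroup (Equiv.Perm V))
    (F : Set (Fin n → G))
    (hF : ∀ f ∈ F, ∀ f' ∈ F, ∃ (i : Fin n) (v : V),
      (f i : Equiv.Perm V) v = (f' i : Equiv.Perm V) v) :
    Nat.card F ≤ maxInter G * Nat.card G ^ (n - 1) := by
  classical
  letI : Fintype G := Fintype.ofFinite _
  set U : Set ((Fin n → G) × G) := {p | (fun i => p.2 * p.1 i) ∈ F} with hU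
  have h1 : Nat.card U ≤ Fintype.card (Fin n → G) * maxInter G := by
    refine card_le_fibers_fst U (maxInter G) fun a => ?_
    refine le_maxInter G {c : G | (fun i => c * a i) ∈ F} ?_
    intro c hc c' hc'
    obtain ⟨i, v, hv⟩ := hF _ hc _ hc'
    refine ⟨(a i : Equiv.Perm V) v, ?_⟩
    simpa [Subgroup.coe_mul, Equiv.Perm.mul_apply] using hv
  have e : U ≃ F × G :=
    { toFun := fun u => (⟨fun i => u.val.2 * u.val.1 i, u.2⟩, u.val.2)
      invFun := fun p => ⟨(fun i => (p.2)⁻¹ * (p.1.val i), p.2), by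
        have hfun : (fun i => p.2 * ((p.2)⁻¹ * (p.1.val i))) = p.1.val :=
          funext fun i => by rw [mul_inv_cancel_left]
        show (fun i => p.2 * ((p.2)⁻¹ * (p.1.val i))) ∈ F
        rw [hfun]; exact p.1.2⟩
      left_inv := fun u => Subtype.ext (Prod.ext
        (funext fun i => by simp) rfl)
      right_inv := fun p => Prod.ext
        (Subtype.ext (funext fun i => by simp)) rfl }
  have h2 : Nat.card F * Nat.card G = Nat.card U := by
    rw [Nat.card_congr e, Nat.card_prod]
  have hpow : Fintype.card (Fin n → G) = Nat.card G ^ n := by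
    rw [Fintype.card_fun, Fintype.card_fin, Nat.card_eq_fintype_card]
  have hmn : Nat.card G ^ n = Nat.card G ^ (n - 1) * Nat.card G := by
    conv_lhs => rw [← Nat.sub_add_cancel hn]
    rw [pow_succ]
  have hm : 0 < Nat.card G := Nat.card_pos
  have : Nat.card F * Nat.card G ≤ maxInter G * Nat.card G ^ (n - 1) * Nat.card G := by
    rw [h2]
    calc Nat.card U ≤ Fintype.card (Fin n → G) * maxInter G := h1
      _ = maxInter G * Nat.card G ^ (n - 1) * Nat.card G := by
          rw [hpow, hmn]; ring
  exact Nat.le_of_mul_le_mul_right this hm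

/-- The key counting bound for intersecting sets in the wreath product. -/
lemma card_inter_wreath_le [Fintype V] [Nonempty V] (hn : 0 < n)
    (G : Subgroup (Equiv.Perm V)) (H : Subgroup (Equiv.Perm (Fin n)))
    (I : Set (wreathProd G H)) (hI : IsIntersecting (wreathProd G H) I) :
    Nat.card I ≤ maxInter H * (maxInter G * Nat.card G ^ (n - 1)) := by
  classical
  set S : Set ((Fin n → G) × H) := wr G H ⁻¹' I with hS
  have hcard : Nat.card I = Nat.card S := by
    refine (Nat.card_congr ?_).symm
    exact (Equiv.ofBijective (wr G H) wr_bijective).subtypeEquiv fun p => Iff.rfl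
  have hfib : ∀ h : H, Nat.card {g : Fin n → G | (g, h) ∈ S}
      ≤ maxInter G * Nat.card G ^ (n - 1) := by
    intro h
    refine fiber_bound hn G _ ?_
    rintro f hf f' hf'
    obtain ⟨⟨v, i⟩, hv⟩ := hI _ hf _ hf'
    have hv1 : ((f i : Equiv.Perm V) v, (h : Equiv.Perm (Fin n)) i)
        = ((f' i : Equiv.Perm V) v, (h : Equiv.Perm (Fin n)) i) := hv
    exact ⟨i, v, congrArg Prod.fst hv1⟩
  have himg : Nat.card (Prod.snd '' S) ≤ maxInter H := by
    refine le_maxInter H _ ?_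
    rintro h ⟨p, hp, rfl⟩ h' ⟨p', hp', rfl⟩
    obtain ⟨⟨v, i⟩, hv⟩ := hI _ hp _ hp'
    have hv1 : ((p.1 i : Equiv.Perm V) v, (p.2 : Equiv.Perm (Fin n)) i)
        = ((p'.1 i : Equiv.Perm V) v, (p'.2 : Equiv.Perm (Fin n)) i) := hv
    exact ⟨i, congrArg Prod.snd hv1⟩
  calc Nat.card I = Nat.card S := hcard
    _ ≤ Nat.card (Prod.snd '' S) * (maxInter G * Nat.card G ^ (n - 1)) :=
        card_le_fibers_snd S _ hfib
    _ ≤ maxInter H * (maxInter G * Nat.card G ^ (n - 1)) :=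
        Nat.mul_le_mul_right _ himg

end Counting

/-- For transitive permutation groups `G ≤ Sym(V)` and `H ≤ Sₙ`, the
intersection density of the wreath product satisfies `ρ(G) ≤ ρ(G ≀ H) ≤ ρ(G) * ρ(H)`. -/
theorem interDensity_wreathProd_bounds {V : Type*} [Fintype V] [Nonempty V] {n : ℕ}
    (hn : 0 < n) (G : Subgroup (Equiv.Perm V)) (H : Subgroup (Equiv.Perm (Fin n)))
    (hG : IsTransitive G) (hH : IsTransitive H) :
    interDensity G ≤ interDensity (wreathProd G H) ∧
      interDensity (wreathProd G H) ≤ interDensity G * interDensity H := by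
  haveI : Nonempty (Fin n) := ⟨⟨0, hn⟩⟩
  constructor
  · refine csSup_le ⟨0, zero_mem_densSet G⟩ ?_
    rintro x ⟨I, v, hI, rfl⟩
    set i₀ : Fin n := ⟨0, hn⟩
    have hm : (0:ℝ) < (Nat.card G : ℝ) := by exact_mod_cast Nat.card_pos
    have hsg : (0:ℝ) < (Nat.card (stabSet G v) : ℝ) := by exact_mod_cast stabSet_card_pos G v
    have hsh : (0:ℝ) < (Nat.card (stabSet H i₀) : ℝ) := by exact_mod_cast stabSet_card_pos H i₀
    have hkey : (Nat.card I : ℝ) / (Nat.card (stabSet G v) : ℝ)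
        = (Nat.card (wSet G H i₀ I (stabSet H i₀)) : ℝ)
          / (Nat.card (stabSet (wreathProd G H) (v, i₀)) : ℝ) := by
      rw [stabSet_eq_wSet, wSet_card, wSet_card]
      have hd2 : (0:ℝ) < (Nat.card (stabSet G v) : ℝ)
          * ((Nat.card G : ℝ) ^ (n-1) * (Nat.card (stabSet H i₀) : ℝ)) :=
        mul_pos hsg (mul_pos (pow_pos hm _) hsh)
      push_cast
      rw [div_eq_div_iff hsg.ne' hd2.ne']
      ring
    rw [hkey]
    exact le_csSup (bddAbove_densSet (wreathProd G H))
      ⟨_, (v, i₀), wSet_intersecting i₀ I hI, rfl⟩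
  · refine csSup_le ⟨0, zero_mem_densSet (wreathProd G H)⟩ ?_
    rintro x ⟨I, ⟨v, i₀⟩, hI, rfl⟩
    obtain ⟨IG, hIG, hIGc⟩ := exists_maxInter G
    obtain ⟨IH, hIH, hIHc⟩ := exists_maxInter H
    have hb := card_inter_wreath_le hn G H I hI
    have hstab : Nat.card (stabSet (wreathProd G H) (v, i₀))
        = Nat.card (stabSet G v) * (Nat.card G ^ (n-1) * Nat.card (stabSet H i₀)) := by
      rw [stabSet_eq_wSet, wSet_card]
    have h1 : (maxInter G : ℝ) / (Nat.card (stabSet G v) : ℝ) ≤ interDensity G :=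
      le_csSup (bddAbove_densSet G) ⟨IG, v, hIG, by rw [hIGc]⟩
    have h2 : (maxInter H : ℝ) / (Nat.card (stabSet H i₀) : ℝ) ≤ interDensity H :=
      le_csSup (bddAbove_densSet H) ⟨IH, i₀, hIH, by rw [hIHc]⟩
    have hm : (0:ℝ) < (Nat.card G : ℝ) := by exact_mod_cast Nat.card_pos
    have hsg : (0:ℝ) < (Nat.card (stabSet G v) : ℝ) := by exact_mod_cast stabSet_card_pos G v
    have hsh : (0:ℝ) < (Nat.card (stabSet H i₀) : ℝ) := by exact_mod_cast stabSet_card_pos H i₀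
    have hd : (0:ℝ) < (Nat.card (stabSet G v) : ℝ)
        * ((Nat.card G : ℝ) ^ (n-1) * (Nat.card (stabSet H i₀) : ℝ)) :=
      mul_pos hsg (mul_pos (pow_pos hm _) hsh)
    have hx : (Nat.card I : ℝ) / ((Nat.card (stabSet G v) : ℝ)
        * ((Nat.card G : ℝ) ^ (n-1) * (Nat.card (stabSet H i₀) : ℝ)))
        ≤ ((maxInter G : ℝ) / (Nat.card (stabSet G v) : ℝ))
          * ((maxInter H : ℝ) / (Nat.card (stabSet H i₀) : ℝ)) := by
      rw [div_le_iff₀ hd]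
      have e2 : ((maxInter G : ℝ) / (Nat.card (stabSet G v) : ℝ))
          * ((maxInter H : ℝ) / (Nat.card (stabSet H i₀) : ℝ))
          * ((Nat.card (stabSet G v) : ℝ)
            * ((Nat.card G : ℝ) ^ (n-1) * (Nat.card (stabSet H i₀) : ℝ)))
          = (maxInter H : ℝ) * ((maxInter G : ℝ) * (Nat.card G : ℝ) ^ (n-1)) := by
        field_simp
      rw [e2]
      exact_mod_cast hb
    have h4 : ((maxInter G : ℝ) / (Nat.card (stabSet G v) : ℝ))
        * ((maxInter H : ℝ) / (Nat.card (stabSet H i₀) : ℝ))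
        ≤ interDensity G * interDensity H :=
      mul_le_mul h1 h2 (div_nonneg (Nat.cast_nonneg _) (Nat.cast_nonneg _))
        (interDensity_nonneg G)
    calc (Nat.card I : ℝ) / (Nat.card (stabSet (wreathProd G H) (v, i₀)) : ℝ)
        = (Nat.card I : ℝ) / ((Nat.card (stabSet G v) : ℝ)
          * ((Nat.card G : ℝ) ^ (n-1) * (Nat.card (stabSet H i₀) : ℝ))) := by
          rw [hstab]; push_cast; ring_nf
      _ ≤ _ := hx.trans h4
end

section
/- The wreath product S₃ ≀ S₂, acting on {1,2,3} × {1,2} by ((g₁,g₂),h)·(a,i) = (g_i(a), h(i)), does not have the strict-EKR-property. -/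
/-! ### Auxiliary machinery for Statement 15 -/

/-- A 12-valued colouring of `Sym({1,2,3}×{1,2})`; restricted to the wreath product
`S₃ ≀ S₂` its fibres are cliques of the derangement graph. -/
def fkey (σ : Equiv.Perm (Fin 3 × Fin 2)) : Bool × Bool × Fin 3 :=
  (decide ((σ (1,0)).1 - (σ (0,0)).1 = 1), decide ((σ (1,1)).1 - (σ (0,1)).1 = 1),
   (σ (0,0)).1 - (σ (0,1)).1)

set_option maxRecDepth 100000 in
set_option maxHeartbeats 2000000 in
lemma keylemma : ∀ (g g' : Fin 2 → Equiv.Perm (Fin 3)) (h h' : Equiv.Perm (Fin 2)),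
    fkey (wreathPerm g h) = fkey (wreathPerm g' h') →
    wreathPerm g h = wreathPerm g' h' ∨
      ∀ v, wreathPerm g h v ≠ wreathPerm g' h' v := by decide

/-- An explicit intersecting set of size 12 in `S₃ ≀ S₂` which is not a coset of a
point stabilizer. -/
def Fset : Finset (Equiv.Perm (Fin 3 × Fin 2)) :=
  (Finset.univ.image fun g : Equiv.Perm (Fin 3) => wreathPerm ![1, g] 1) ∪
  ((Finset.univ.filter fun g : Equiv.Perm (Fin 3) => Equiv.Perm.sign g = -1) ×ˢ
      ({1, Equiv.swap 0 1} : Finset (Equiv.Perm (Fin 3)))).image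
    (fun p => wreathPerm ![p.1, p.2] 1)

set_option maxRecDepth 100000 in
set_option maxHeartbeats 2000000 in
lemma Fcard : Fset.card = 12 := by decide

set_option maxRecDepth 100000 in
set_option maxHeartbeats 2000000 in
lemma Fint : ∀ σ ∈ Fset, ∀ τ ∈ Fset, ∃ v, σ v = τ v := by decide

set_option maxRecDepth 100000 in
set_option maxHeartbeats 2000000 in
lemma Fnc : ∀ v : Fin 3 × Fin 2, ∃ σ ∈ Fset, ∃ τ ∈ Fset, σ v ≠ τ v := by decide

lemma memF_W : ∀ σ ∈ Fset,
    σ ∈ wreathProd (⊤ : Subgroup (Equiv.Perm (Fin 3))) (⊤ : Subgroup (Equiv.Perm (Fin 2))) := by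
  intro σ hσ
  rcases Finset.mem_union.1 hσ with h | h
  · rcases Finset.mem_image.1 h with ⟨g, -, rfl⟩
    exact ⟨![1, g], 1, fun _ => trivial, trivial, rfl⟩
  · rcases Finset.mem_image.1 h with ⟨p, -, rfl⟩
    exact ⟨![p.1, p.2], 1, fun _ => trivial, trivial, rfl⟩

/-- The wreath product `S₃ ≀ S₂`, acting on `{1,2,3} × {1,2}`, does not
have the strict-EKR-property. -/
theorem S3_wr_S2_not_hasStrictEKR :
    ¬ HasStrictEKR (wreathProd (⊤ : Subgroup (Equiv.Perm (Fin 3)))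
        (⊤ : Subgroup (Equiv.Perm (Fin 2)))) := by
  intro hS
  set W := wreathProd (⊤ : Subgroup (Equiv.Perm (Fin 3)))
      (⊤ : Subgroup (Equiv.Perm (Fin 2))) with hW
  -- the intersecting set
  set I : Set W := {x : W | (x : Equiv.Perm (Fin 3 × Fin 2)) ∈ Fset} with hI
  have hIcard : Nat.card I = 12 := by
    have e : I ≃ {σ // σ ∈ Fset} :=
      { toFun := fun x => ⟨x.1.1, x.2⟩
        invFun := fun σ => ⟨⟨σ.1, memF_W σ.1 σ.2⟩, σ.2⟩
        left_inv := fun x => Subtype.ext (Subtype.ext rfl)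
        right_inv := fun σ => rfl }
    rw [Nat.card_congr e, Nat.card_eq_fintype_card, Fintype.card_coe, Fcard]
  have hInt : IsIntersecting W I := fun g hg h hh => Fint _ hg _ hh
  have hMax : ∀ J : Set W, IsIntersecting W J → Nat.card J ≤ Nat.card I := by
    intro J hJ
    rw [hIcard]
    have hinj : Function.Injective (fun x : J => fkey (x.1 : Equiv.Perm (Fin 3 × Fin 2))) := by
      intro x y hxy
      by_contra hne
      have hne1 : (x.1 : Equiv.Perm (Fin 3 × Fin 2)) ≠ (y.1 : Equiv.Perm (Fin 3 × Fin 2)) := by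
        intro h
        exact hne (Subtype.ext (Subtype.ext h))
      obtain ⟨g, h, -, -, hx⟩ := x.1.2
      obtain ⟨g', h', -, -, hy⟩ := y.1.2
      have hxy' : fkey (wreathPerm g h) = fkey (wreathPerm g' h') := by
        rw [← hx, ← hy]; exact hxy
      rcases keylemma g g' h h' hxy' with heq | hder
      · exact hne1 (by rw [hx, hy, heq])
      · obtain ⟨v, hv⟩ := hJ x.1 x.2 y.1 y.2
        exact hder v (by rw [← hx, ← hy] at hder ⊢; exact hv)
    calc Nat.card J ≤ Nat.card (Bool × Bool × Fin 3) := Nat.card_le_card_of_injective _ hinj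
      _ = 12 := by simp [Nat.card_eq_fintype_card]
  obtain ⟨v, a, hEq⟩ := hS I hInt hMax
  obtain ⟨σ, hσF, τ, hτF, hne⟩ := Fnc v
  have key : ∀ ρ : Equiv.Perm (Fin 3 × Fin 2), ∀ hρ : ρ ∈ Fset, ρ v = (a : Equiv.Perm _) v := by
    intro ρ hρ
    have hρI : (⟨ρ, memF_W ρ hρ⟩ : W) ∈ I := hρ
    rw [hEq] at hρI
    obtain ⟨g, hg, hg2⟩ := hρI
    have h3 := congrArg (fun w : W => (w : Equiv.Perm (Fin 3 × Fin 2)) v) hg2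
    simp only [Subgroup.coe_mul, Equiv.Perm.mul_apply] at h3
    have hgv : (g : Equiv.Perm (Fin 3 × Fin 2)) v = v := hg
    rw [hgv] at h3
    exact h3.symm
  exact hne ((key σ hσF).trans (key τ hτF).symm)
end
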